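/- Decomposition of the linearized Ginzburg–Landau operator: let Ω ⊆ ℝⁿ be open, ε > 0, let u, φ : Ω → ℂ and A, ω : Ω → ℝⁿ all be C². Then at every point of Ω the Gateaux derivative (d/ds)|_{s=0} S_ε(u + sφ, A + sω) equals L_W[Φ] − Θ_W[Θ_W*[Φ]], where W = (u,A), Φ = (φ,ω), Θ_W[γ] = (iuγ, ∇γ), Θ_W*[Φ] = −ε² div ω + ⟨φ, iu⟩, and L_W[Φ] has components L_W¹[Φ] = −ε² Σⱼ ∂ⱼ^A(∂ⱼ^A φ) − ½(1−3|u|²)φ + 2iε² Σⱼ (∂ⱼ^A u) ωⱼ and (L_W²[Φ])ₖ = −ε² Δωₖ + |u|² ωₖ + 2⟨i ∂ₖ^A u, φ⟩ for k = 1,…,n. -/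

import Mathlib

/-!
STATEMENT 5: decomposition of the linearized Ginzburg–Landau operator:
`S_ε'(W)[Φ] = L_W[Φ] − Θ_W[Θ_W*[Φ]]` pointwise, where `Θ_W[γ] = (iuγ, ∇γ)` and
`Θ_W*[Φ] = −ε² div ω + ⟨φ, iu⟩`.
-/

open Complex

noncomputable section

/-- Partial derivative in the `j`-th coordinate direction. -/
def pd {n : ℕ} {E : Type*} [NormedAddCommGroup E] [NormedSpace ℝ E]
    (j : Fin n) (f : (Fin n → ℝ) → E) (x : Fin n → ℝ) : E :=
  fderiv ℝ f x (Pi.single j 1)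

/-- Covariant partial derivative `∂ⱼ^A u = ∂ⱼu − iAⱼu`. -/
def covD {n : ℕ} (j : Fin n) (A : (Fin n → ℝ) → Fin n → ℝ)
    (u : (Fin n → ℝ) → ℂ) (x : Fin n → ℝ) : ℂ :=
  pd j u x - Complex.I * (A x j : ℂ) * u x

/-- Real pairing `⟨v,w⟩ = Re (v * conj w)`. -/
def rpair (v w : ℂ) : ℝ := (v * (starRingEnd ℂ) w).re

/-- `S_ε¹(u,A) = −ε² Σⱼ ∂ⱼ^A(∂ⱼ^A u) − ½(1−|u|²)u`. -/
def GL1 {n : ℕ} (ε : ℝ) (u : (Fin n → ℝ) → ℂ) (A : (Fin n → ℝ) → Fin n → ℝ)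
    (x : Fin n → ℝ) : ℂ :=
  -(ε : ℂ) ^ 2 * ∑ j : Fin n, covD j A (covD j A u) x
    - (1 / 2 : ℂ) * ((1 - Complex.normSq (u x) : ℝ) : ℂ) * u x

/-- `(S_ε²(u,A))ₖ = −ε² Σⱼ ∂ⱼ(∂ⱼAₖ − ∂ₖAⱼ) − ⟨∂ₖ^A u, iu⟩`. -/
def GL2 {n : ℕ} (ε : ℝ) (u : (Fin n → ℝ) → ℂ) (A : (Fin n → ℝ) → Fin n → ℝ)
    (x : Fin n → ℝ) (k : Fin n) : ℝ :=
  -ε ^ 2 * ∑ j : Fin n,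
      pd j (fun y => pd j (fun w => A w k) y - pd k (fun w => A w j) y) x
    - rpair (covD k A u x) (Complex.I * u x)

/-- `Θ_W*[Φ] = −ε² div ω + ⟨φ, iu⟩`. -/
def thetaStar {n : ℕ} (ε : ℝ) (u : (Fin n → ℝ) → ℂ) (φ : (Fin n → ℝ) → ℂ)
    (ω : (Fin n → ℝ) → Fin n → ℝ) (x : Fin n → ℝ) : ℝ :=
  -ε ^ 2 * ∑ j : Fin n, pd j (fun w => ω w j) x + rpair (φ x) (Complex.I * u x)

namespace GLaux

variable {n : ℕ}

section pdcalc

variable {E F : Type*} [NormedAddCommGroup E] [NormedSpace ℝ E]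
  [NormedAddCommGroup F] [NormedSpace ℝ F]
  {j : Fin n} {x : Fin n → ℝ}

lemma pd_add {f g : (Fin n → ℝ) → E} (hf : DifferentiableAt ℝ f x)
    (hg : DifferentiableAt ℝ g x) :
    pd j (fun y => f y + g y) x = pd j f x + pd j g x := by
  simp [pd, fderiv_fun_add hf hg]

lemma pd_sub {f g : (Fin n → ℝ) → E} (hf : DifferentiableAt ℝ f x)
    (hg : DifferentiableAt ℝ g x) :
    pd j (fun y => f y - g y) x = pd j f x - pd j g x := by
  simp [pd, fderiv_fun_sub hf hg]

lemma pd_const_mul {𝔸 : Type*} [NormedRing 𝔸] [NormedAlgebra ℝ 𝔸]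
    {f : (Fin n → ℝ) → 𝔸} (hf : DifferentiableAt ℝ f x) (c : 𝔸) :
    pd j (fun y => c * f y) x = c * pd j f x := by
  simp [pd, fderiv_const_mul hf c]

lemma pd_mul {f g : (Fin n → ℝ) → ℂ} (hf : DifferentiableAt ℝ f x)
    (hg : DifferentiableAt ℝ g x) :
    pd j (fun y => f y * g y) x = f x * pd j g x + g x * pd j f x := by
  simp [pd, fderiv_fun_mul hf hg]

lemma pd_clm (L : E →L[ℝ] F) {f : (Fin n → ℝ) → E} (hf : DifferentiableAt ℝ f x) :
    pd j (fun y => L (f y)) x = L (pd j f x) := by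
  have h : fderiv ℝ (fun y => L (f y)) x = L.comp (fderiv ℝ f x) :=
    (L.hasFDerivAt.comp x hf.hasFDerivAt).fderiv
  simp [pd, h]

lemma pd_ofReal {f : (Fin n → ℝ) → ℝ} (hf : DifferentiableAt ℝ f x) :
    pd j (fun y => ((f y : ℝ) : ℂ)) x = ((pd j f x : ℝ) : ℂ) := by
  simpa using pd_clm Complex.ofRealCLM hf

lemma pd_re {f : (Fin n → ℝ) → ℂ} (hf : DifferentiableAt ℝ f x) :
    pd j (fun y => (f y).re) x = (pd j f x).re := by
  simpa using pd_clm Complex.reCLM hf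

lemma pd_conj {f : (Fin n → ℝ) → ℂ} (hf : DifferentiableAt ℝ f x) :
    pd j (fun y => (starRingEnd ℂ) (f y)) x = (starRingEnd ℂ) (pd j f x) := by
  simpa using pd_clm (Complex.conjCLE.toContinuousLinearMap) hf

lemma pd_sum {ι : Type*} {s : Finset ι} {f : ι → (Fin n → ℝ) → E}
    (hf : ∀ i ∈ s, DifferentiableAt ℝ (f i) x) :
    pd j (fun y => ∑ i ∈ s, f i y) x = ∑ i ∈ s, pd j (f i) x := by
  simp [pd, fderiv_fun_sum hf]

end pdcalc

section diffprov

variable {E : Type*} [NormedAddCommGroup E] [NormedSpace ℝ E]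
  {Ω : Set (Fin n → ℝ)} {g : (Fin n → ℝ) → E} {x : Fin n → ℝ}

lemma diffAt_of_C2 (hΩ : IsOpen Ω) (hg : ContDiffOn ℝ 2 g Ω) (hx : x ∈ Ω) :
    DifferentiableAt ℝ g x :=
  ((hg.differentiableOn (by norm_num)).differentiableAt (hΩ.mem_nhds hx))

lemma contDiffOn_pd (hΩ : IsOpen Ω) (hg : ContDiffOn ℝ 2 g Ω) (j : Fin n) :
    ContDiffOn ℝ 1 (fun y => pd j g y) Ω := by
  have h1 : ContDiffOn ℝ 1 (fderiv ℝ g) Ω := hg.fderiv_of_isOpen hΩ (by norm_num)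
  exact (ContinuousLinearMap.apply ℝ E (Pi.single j (1:ℝ))).contDiff.comp_contDiffOn h1

lemma diffAt_pd (hΩ : IsOpen Ω) (hg : ContDiffOn ℝ 2 g Ω) (hx : x ∈ Ω) (j : Fin n) :
    DifferentiableAt ℝ (fun y => pd j g y) x :=
  (((contDiffOn_pd hΩ hg j).differentiableOn one_ne_zero).differentiableAt (hΩ.mem_nhds hx))

lemma pd_eq_snd (hΩ : IsOpen Ω) (hg : ContDiffOn ℝ 2 g Ω) (hx : x ∈ Ω) (a b : Fin n) :
    pd a (fun y => pd b g y) x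
      = fderiv ℝ (fderiv ℝ g) x (Pi.single a 1) (Pi.single b 1) := by
  have hdf : DifferentiableAt ℝ (fderiv ℝ g) x :=
    (((hg.fderiv_of_isOpen hΩ (by norm_num : (1:WithTop ℕ∞) + 1 ≤ 2)).differentiableOn
      one_ne_zero).differentiableAt (hΩ.mem_nhds hx))
  have h : fderiv ℝ ((ContinuousLinearMap.apply ℝ E (Pi.single b (1:ℝ))) ∘ (fderiv ℝ g)) x
      = (ContinuousLinearMap.apply ℝ E (Pi.single b (1:ℝ))).comp (fderiv ℝ (fderiv ℝ g) x) :=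
    (by
      have hL : HasFDerivAt (ContinuousLinearMap.apply ℝ E (Pi.single b (1:ℝ)) :
          ((Fin n → ℝ) →L[ℝ] E) → E) (ContinuousLinearMap.apply ℝ E (Pi.single b (1:ℝ)))
          (fderiv ℝ g x) := ContinuousLinearMap.hasFDerivAt _
      exact (hL.comp x hdf.hasFDerivAt).fderiv)
  have h2 : pd a (fun y => pd b g y) x
      = fderiv ℝ ((ContinuousLinearMap.apply ℝ E (Pi.single b (1:ℝ))) ∘ (fderiv ℝ g)) x
          (Pi.single a 1) := rfl
  rw [h2, h]
  rfl

lemma pd_comm (hΩ : IsOpen Ω) (hg : ContDiffOn ℝ 2 g Ω) (hx : x ∈ Ω) (a b : Fin n) :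
    pd a (fun y => pd b g y) x = pd b (fun y => pd a g y) x := by
  have hsym : IsSymmSndFDerivAt ℝ g x :=
    (hg.contDiffAt (hΩ.mem_nhds hx)).isSymmSndFDerivAt (by simp [minSmoothness_of_isRCLikeNormedField])
  rw [pd_eq_snd hΩ hg hx a b, pd_eq_snd hΩ hg hx b a, hsym]

end diffprov

section derivlemmas

lemma hasDerivAt_coe : HasDerivAt (fun s : ℝ => (s : ℂ)) 1 0 := by
  exact Complex.ofRealCLM.hasDerivAt (x := (0:ℝ))

lemma deriv_cubicC (c0 c1 c2 c3 : ℂ) (f : ℝ → ℂ)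
    (hf : ∀ s : ℝ, f s = c0 + c1 * (s:ℂ) + c2 * ((s:ℂ) * (s:ℂ)) + c3 * ((s:ℂ) * (s:ℂ) * (s:ℂ))) :
    deriv f 0 = c1 := by
  have h1 : HasDerivAt (fun s : ℝ => (s : ℂ)) 1 0 := hasDerivAt_coe
  have h2 := h1.mul h1
  have h3 := (h1.mul h1).mul h1
  have H := (((hasDerivAt_const (0:ℝ) c0).add (h1.const_mul c1)).add
    (h2.const_mul c2)).add (h3.const_mul c3)
  have hfe : f = fun s : ℝ => c0 + c1 * (s:ℂ) + c2 * ((s:ℂ) * (s:ℂ))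
      + c3 * ((s:ℂ) * (s:ℂ) * (s:ℂ)) := funext hf
  rw [hfe]
  rw [HasDerivAt.deriv (f := (fun s : ℝ => c0 + c1 * (s:ℂ) + c2 * ((s:ℂ) * (s:ℂ))
      + c3 * ((s:ℂ) * (s:ℂ) * (s:ℂ)))) H]
  simp

lemma deriv_cubicR (t0 t1 : ℝ) (C0 C1 C2 C3 : ℂ) (f : ℝ → ℝ)
    (hf : ∀ s : ℝ, f s = t0 + t1 * s
      - (C0 + C1 * (s:ℂ) + C2 * ((s:ℂ) * (s:ℂ)) + C3 * ((s:ℂ) * (s:ℂ) * (s:ℂ))).re) :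
    deriv f 0 = t1 - C1.re := by
  have h1 : HasDerivAt (fun s : ℝ => (s : ℂ)) 1 0 := hasDerivAt_coe
  have h2 := h1.mul h1
  have h3 := (h1.mul h1).mul h1
  have HC := (((hasDerivAt_const (0:ℝ) C0).add (h1.const_mul C1)).add
    (h2.const_mul C2)).add (h3.const_mul C3)
  have HCre := Complex.reCLM.hasFDerivAt.comp_hasDerivAt (0:ℝ) HC
  have HL : HasDerivAt (fun s : ℝ => t0 + t1 * s) t1 0 := by
    simpa using ((hasDerivAt_id (0:ℝ)).const_mul t1).const_add t0
  have H := HL.sub HCre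
  have hfe : f = fun s : ℝ => (t0 + t1 * s)
      - (C0 + C1 * (s:ℂ) + C2 * ((s:ℂ) * (s:ℂ)) + C3 * ((s:ℂ) * (s:ℂ) * (s:ℂ))).re :=
    funext hf
  rw [hfe]
  have H' : HasDerivAt (fun s : ℝ => t0 + t1 * s
      - (C0 + C1 * (s:ℂ) + C2 * ((s:ℂ) * (s:ℂ)) + C3 * ((s:ℂ) * (s:ℂ) * (s:ℂ))).re)
      (t1 - Complex.reCLM (0 + C1 * 1 + C2 * (1 * ((0:ℝ):ℂ) + ((0:ℝ):ℂ) * 1)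
        + C3 * ((1 * ((0:ℝ):ℂ) + ((0:ℝ):ℂ) * 1) * ((0:ℝ):ℂ) + ((0:ℝ):ℂ) * ((0:ℝ):ℂ) * 1))) 0 := H
  rw [H'.deriv]
  simp

lemma sum_cubic_split (s : ℂ) (a b c d : Fin n → ℂ) :
    ∑ j : Fin n, (a j + s * b j + (s * s) * c j + (s * s * s) * d j)
      = (∑ j : Fin n, a j) + s * (∑ j : Fin n, b j) + (s * s) * (∑ j : Fin n, c j)
        + (s * s * s) * (∑ j : Fin n, d j) := by
  rw [Finset.sum_add_distrib, Finset.sum_add_distrib, Finset.sum_add_distrib,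
    ← Finset.mul_sum, ← Finset.mul_sum, ← Finset.mul_sum]

lemma sum_linear_split (s : ℝ) (a b : Fin n → ℝ) :
    ∑ j : Fin n, (a j + s * b j)
      = (∑ j : Fin n, a j) + s * (∑ j : Fin n, b j) := by
  rw [Finset.sum_add_distrib, ← Finset.mul_sum]

end derivlemmas

end GLaux

namespace GLaux2

open GLaux

variable {n : ℕ} {x : Fin n → ℝ}

lemma diffAt_ofReal {f : (Fin n → ℝ) → ℝ} (h : DifferentiableAt ℝ f x) :
    DifferentiableAt ℝ (fun y => ((f y : ℝ) : ℂ)) x := by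
  exact Complex.ofRealCLM.differentiableAt.comp x h

lemma diffAt_conj {f : (Fin n → ℝ) → ℂ} (h : DifferentiableAt ℝ f x) :
    DifferentiableAt ℝ (fun y => (starRingEnd ℂ) (f y)) x := by
  exact
    (Complex.conjCLE.toContinuousLinearMap.differentiableAt.comp x h)

lemma diffAt_re {f : (Fin n → ℝ) → ℂ} (h : DifferentiableAt ℝ f x) :
    DifferentiableAt ℝ (fun y => (f y).re) x := by
  exact Complex.reCLM.differentiableAt.comp x h

lemma covD_perturb {j : Fin n} {A ω : (Fin n → ℝ) → Fin n → ℝ} {u φ : (Fin n → ℝ) → ℂ}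
    {s : ℝ} {y : Fin n → ℝ}
    (hu : DifferentiableAt ℝ u y) (hφ : DifferentiableAt ℝ φ y) :
    covD j (fun z m => A z m + s * ω z m) (fun z => u z + (s:ℂ) * φ z) y
      = pd j u y + (s:ℂ) * pd j φ y
        - Complex.I * (((A y j : ℝ):ℂ) + (s:ℂ) * ((ω y j : ℝ):ℂ)) * (u y + (s:ℂ) * φ y) := by
  simp only [covD]
  rw [pd_add hu (hφ.const_mul ((s:ℂ))), pd_const_mul hφ ((s:ℂ))]
  push_cast
  ring

lemma pd_covD_eval {j : Fin n} {A : (Fin n → ℝ) → Fin n → ℝ} {f : (Fin n → ℝ) → ℂ}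
    (hf : DifferentiableAt ℝ f x) (hf2 : DifferentiableAt ℝ (fun y => pd j f y) x)
    (hA : DifferentiableAt ℝ (fun y => A y j) x) :
    pd j (covD j A f) x
      = pd j (fun y => pd j f y) x
        - Complex.I * ((pd j (fun y => A y j) x : ℝ):ℂ) * f x
        - Complex.I * ((A x j : ℝ):ℂ) * pd j f x := by
  have h0 : covD j A f = fun y => pd j f y - Complex.I * ((A y j : ℝ):ℂ) * f y := by
    funext y; rfl
  rw [h0, pd_sub hf2 (((diffAt_ofReal hA).const_mul Complex.I).fun_mul hf),
    pd_mul ((diffAt_ofReal hA).const_mul Complex.I) hf,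
    pd_const_mul (diffAt_ofReal hA) Complex.I, pd_ofReal hA]
  ring

lemma pd_shape {j : Fin n} {s : ℝ} {f g U V : (Fin n → ℝ) → ℂ} {a b : (Fin n → ℝ) → ℝ}
    (hf : DifferentiableAt ℝ f x) (hg : DifferentiableAt ℝ g x)
    (hU : DifferentiableAt ℝ U x) (hV : DifferentiableAt ℝ V x)
    (ha : DifferentiableAt ℝ a x) (hb : DifferentiableAt ℝ b x) :
    pd j (fun y => f y + (s:ℂ) * g y
        - Complex.I * (((a y : ℝ):ℂ) + (s:ℂ) * ((b y : ℝ):ℂ)) * (U y + (s:ℂ) * V y)) x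
      = pd j f x + (s:ℂ) * pd j g x
        - Complex.I * (((pd j a x : ℝ):ℂ) + (s:ℂ) * ((pd j b x : ℝ):ℂ)) * (U x + (s:ℂ) * V x)
        - Complex.I * (((a x : ℝ):ℂ) + (s:ℂ) * ((b x : ℝ):ℂ)) * (pd j U x + (s:ℂ) * pd j V x)
      := by
  have hab : DifferentiableAt ℝ (fun y => ((a y : ℝ):ℂ) + (s:ℂ) * ((b y : ℝ):ℂ)) x :=
    (diffAt_ofReal ha).add ((diffAt_ofReal hb).const_mul ((s:ℂ)))
  have hco : DifferentiableAt ℝ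
      (fun y => Complex.I * (((a y : ℝ):ℂ) + (s:ℂ) * ((b y : ℝ):ℂ))) x :=
    hab.const_mul Complex.I
  have hUV : DifferentiableAt ℝ (fun y => U y + (s:ℂ) * V y) x :=
    hU.add (hV.const_mul ((s:ℂ)))
  rw [pd_sub (hf.fun_add (hg.const_mul ((s:ℂ)))) (hco.fun_mul hUV),
    pd_add hf (hg.const_mul ((s:ℂ))), pd_const_mul hg ((s:ℂ)),
    pd_mul hco hUV, pd_const_mul hab Complex.I,
    pd_add (diffAt_ofReal ha) ((diffAt_ofReal hb).const_mul ((s:ℂ))),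
    pd_const_mul (diffAt_ofReal hb) ((s:ℂ)), pd_ofReal ha, pd_ofReal hb,
    pd_add hU (hV.const_mul ((s:ℂ))), pd_const_mul hV ((s:ℂ))]
  ring

lemma pd_thetaStar {Ω : Set (Fin n → ℝ)} (hΩ : IsOpen Ω) (hx : x ∈ Ω)
    (ε : ℝ) {u φ : (Fin n → ℝ) → ℂ} {ω : (Fin n → ℝ) → Fin n → ℝ}
    (hu : ContDiffOn ℝ 2 u Ω) (hφ : ContDiffOn ℝ 2 φ Ω)
    (hωc : ∀ m, ContDiffOn ℝ 2 (fun w => ω w m) Ω) (k : Fin n) :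
    pd k (thetaStar ε u φ ω) x
      = -ε ^ 2 * ∑ j : Fin n, pd k (fun y => pd j (fun w => ω w j) y) x
        + ((pd k φ x * (starRingEnd ℂ) (Complex.I * u x)).re
          + (φ x * (starRingEnd ℂ) (Complex.I * pd k u x)).re) := by
  have h0 : thetaStar ε u φ ω
      = fun y => -ε ^ 2 * (∑ j : Fin n, pd j (fun w => ω w j) y)
          + (φ y * (starRingEnd ℂ) (Complex.I * u y)).re := by
    funext y; rfl
  have hsd : ∀ i ∈ Finset.univ, DifferentiableAt ℝ (fun y => pd i (fun w => ω w i) y) x :=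
    fun i _ => diffAt_pd hΩ (hωc i) hx i
  have hsum : DifferentiableAt ℝ (fun y => ∑ j : Fin n, pd j (fun w => ω w j) y) x :=
    DifferentiableAt.fun_sum hsd
  have hiu : DifferentiableAt ℝ (fun y => Complex.I * u y) x :=
    (diffAt_of_C2 hΩ hu hx).const_mul _
  have hconj : DifferentiableAt ℝ (fun y => (starRingEnd ℂ) (Complex.I * u y)) x :=
    diffAt_conj hiu
  have hprod : DifferentiableAt ℝ (fun y => φ y * (starRingEnd ℂ) (Complex.I * u y)) x :=
    (diffAt_of_C2 hΩ hφ hx).mul hconj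
  rw [h0, pd_add (hsum.const_mul (-ε ^ 2)) (diffAt_re hprod),
    pd_const_mul hsum (-ε ^ 2), pd_sum hsd, pd_re hprod,
    pd_mul (diffAt_of_C2 hΩ hφ hx) hconj, pd_conj hiu,
    pd_const_mul (diffAt_of_C2 hΩ hu hx) Complex.I]
  simp only [Complex.add_re]
  ring

end GLaux2


set_option maxHeartbeats 4000000 in
theorem statement5 {n : ℕ} (Ω : Set (Fin n → ℝ)) (hΩ : IsOpen Ω) (ε : ℝ) (hε : 0 < ε)
    (u φ : (Fin n → ℝ) → ℂ) (A ω : (Fin n → ℝ) → Fin n → ℝ)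
    (hu : ContDiffOn ℝ 2 u Ω) (hφ : ContDiffOn ℝ 2 φ Ω)
    (hA : ContDiffOn ℝ 2 A Ω) (hω : ContDiffOn ℝ 2 ω Ω) :
    ∀ x ∈ Ω,
      -- first (complex) component of the Gateaux derivative of S_ε at (u,A) in direction (φ,ω)
      (deriv (fun s : ℝ =>
          GL1 ε (fun y => u y + (s : ℂ) * φ y) (fun y j => A y j + s * ω y j) x) 0
        = (-(ε : ℂ) ^ 2 * ∑ j : Fin n, covD j A (covD j A φ) x
            - (1 / 2 : ℂ) * ((1 - 3 * Complex.normSq (u x) : ℝ) : ℂ) * φ x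
            + 2 * Complex.I * (ε : ℂ) ^ 2 * ∑ j : Fin n, covD j A u x * ((ω x j : ℝ) : ℂ))
          - Complex.I * u x * ((thetaStar ε u φ ω x : ℝ) : ℂ)) ∧
      -- second (1-form) component of the Gateaux derivative
      (∀ k : Fin n,
        deriv (fun s : ℝ =>
            GL2 ε (fun y => u y + (s : ℂ) * φ y) (fun y j => A y j + s * ω y j) x k) 0
          = (-ε ^ 2 * ∑ j : Fin n, pd j (fun y => pd j (fun w => ω w k) y) x
              + Complex.normSq (u x) * ω x k
              + 2 * rpair (Complex.I * covD k A u x) (φ x))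
            - pd k (thetaStar ε u φ ω) x) := by
  intro x hx
  have hmem : Ω ∈ nhds x := hΩ.mem_nhds hx
  have hAc : ∀ m, ContDiffOn ℝ 2 (fun w => A w m) Ω := fun m =>
    (ContinuousLinearMap.proj (R := ℝ) (φ := fun _ : Fin n => ℝ) m).contDiff.comp_contDiffOn hA
  have hωc : ∀ m, ContDiffOn ℝ 2 (fun w => ω w m) Ω := fun m =>
    (ContinuousLinearMap.proj (R := ℝ) (φ := fun _ : Fin n => ℝ) m).contDiff.comp_contDiffOn hω
  have hud : ∀ y ∈ Ω, DifferentiableAt ℝ u y := fun y hy => GLaux.diffAt_of_C2 hΩ hu hy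
  have hφd : ∀ y ∈ Ω, DifferentiableAt ℝ φ y := fun y hy => GLaux.diffAt_of_C2 hΩ hφ hy
  have huX : DifferentiableAt ℝ u x := hud x hx
  have hφX : DifferentiableAt ℝ φ x := hφd x hx
  have hu2 : ∀ j : Fin n, DifferentiableAt ℝ (fun y => pd j u y) x :=
    GLaux.diffAt_pd hΩ hu hx
  have hφ2 : ∀ j : Fin n, DifferentiableAt ℝ (fun y => pd j φ y) x :=
    GLaux.diffAt_pd hΩ hφ hx
  have hAdy : ∀ m, ∀ y ∈ Ω, DifferentiableAt ℝ (fun w => A w m) y :=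
    fun m y hy => GLaux.diffAt_of_C2 hΩ (hAc m) hy
  have hωdy : ∀ m, ∀ y ∈ Ω, DifferentiableAt ℝ (fun w => ω w m) y :=
    fun m y hy => GLaux.diffAt_of_C2 hΩ (hωc m) hy
  have hAdX : ∀ m, DifferentiableAt ℝ (fun w => A w m) x := fun m => hAdy m x hx
  have hωdX : ∀ m, DifferentiableAt ℝ (fun w => ω w m) x := fun m => hωdy m x hx
  have hA2 : ∀ j m : Fin n, DifferentiableAt ℝ (fun y => pd j (fun w => A w m) y) x :=
    fun j m => GLaux.diffAt_pd hΩ (hAc m) hx j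
  have hω2 : ∀ j m : Fin n, DifferentiableAt ℝ (fun y => pd j (fun w => ω w m) y) x :=
    fun j m => GLaux.diffAt_pd hΩ (hωc m) hx j
  constructor
  · -- PART 1
    have hf1 : ∀ s : ℝ,
        GL1 ε (fun y => u y + (s : ℂ) * φ y) (fun y j => A y j + s * ω y j) x
          = (-(ε : ℂ) ^ 2 * ∑ j : Fin n, covD j A (covD j A u) x
              - (1 / 2 : ℂ) * ((1 - Complex.normSq (u x) : ℝ) : ℂ) * u x)
            + ((-(ε : ℂ) ^ 2 * ∑ j : Fin n, covD j A (covD j A φ) x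
                - (1 / 2 : ℂ) * ((1 - 3 * Complex.normSq (u x) : ℝ) : ℂ) * φ x
                + 2 * Complex.I * (ε : ℂ) ^ 2 * ∑ j : Fin n, covD j A u x * ((ω x j : ℝ) : ℂ))
              - Complex.I * u x * ((thetaStar ε u φ ω x : ℝ) : ℂ)) * (s : ℂ)
            + (-(ε : ℂ) ^ 2 * ∑ j : Fin n,
                  (-(Complex.I) * φ x * ((pd j (fun w => ω w j) x : ℝ) : ℂ)
                    - 2 * Complex.I * (covD j A φ x * ((ω x j : ℝ) : ℂ))
                    - ((ω x j : ℝ) : ℂ) * ((ω x j : ℝ) : ℂ) * u x)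
                + (1 / 2 : ℂ) * ((u x * (starRingEnd ℂ) (φ x)
                    + φ x * (starRingEnd ℂ) (u x)) * φ x
                  + φ x * (starRingEnd ℂ) (φ x) * u x)) * ((s : ℂ) * (s : ℂ))
            + (-(ε : ℂ) ^ 2 * ∑ j : Fin n,
                  (-(((ω x j : ℝ) : ℂ) * ((ω x j : ℝ) : ℂ)) * φ x)
                + (1 / 2 : ℂ) * (φ x * (starRingEnd ℂ) (φ x) * φ x))
              * ((s : ℂ) * (s : ℂ) * (s : ℂ)) := by
      intro s
      have hj : ∀ j ∈ (Finset.univ : Finset (Fin n)),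
          covD j (fun y m => A y m + s * ω y m)
            (covD j (fun y m => A y m + s * ω y m) (fun y => u y + (s : ℂ) * φ y)) x
          = covD j A (covD j A u) x
            + (s : ℂ) * (covD j A (covD j A φ) x
                - Complex.I * u x * ((pd j (fun w => ω w j) x : ℝ) : ℂ)
                - 2 * Complex.I * (covD j A u x * ((ω x j : ℝ) : ℂ)))
            + ((s : ℂ) * (s : ℂ)) * (-(Complex.I) * φ x * ((pd j (fun w => ω w j) x : ℝ) : ℂ)
                - 2 * Complex.I * (covD j A φ x * ((ω x j : ℝ) : ℂ))
                - ((ω x j : ℝ) : ℂ) * ((ω x j : ℝ) : ℂ) * u x)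
            + ((s : ℂ) * (s : ℂ) * (s : ℂ))
              * (-(((ω x j : ℝ) : ℂ) * ((ω x j : ℝ) : ℂ)) * φ x) := by
        intro j _
        have hEq : (covD j (fun z m => A z m + s * ω z m) (fun z => u z + (s : ℂ) * φ z))
            =ᶠ[nhds x] (fun y => pd j u y + (s : ℂ) * pd j φ y
              - Complex.I * (((A y j : ℝ) : ℂ) + (s : ℂ) * ((ω y j : ℝ) : ℂ))
                * (u y + (s : ℂ) * φ y)) := by
          filter_upwards [hmem] with y hy
          exact GLaux2.covD_perturb (hud y hy) (hφd y hy)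
        have houter : covD j (fun y m => A y m + s * ω y m)
            (covD j (fun y m => A y m + s * ω y m) (fun y => u y + (s : ℂ) * φ y)) x
            = pd j (covD j (fun z m => A z m + s * ω z m) (fun z => u z + (s : ℂ) * φ z)) x
              - Complex.I * ((A x j + s * ω x j : ℝ) : ℂ)
                * covD j (fun z m => A z m + s * ω z m) (fun z => u z + (s : ℂ) * φ z) x := rfl
        have h1 : pd j (covD j (fun z m => A z m + s * ω z m)
              (fun z => u z + (s : ℂ) * φ z)) x
            = pd j (fun y => pd j u y + (s : ℂ) * pd j φ y
              - Complex.I * (((A y j : ℝ) : ℂ) + (s : ℂ) * ((ω y j : ℝ) : ℂ))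
                * (u y + (s : ℂ) * φ y)) x :=
          congrArg (fun L : (Fin n → ℝ) →L[ℝ] ℂ => L (Pi.single j 1)) (hEq.fderiv_eq (𝕜 := ℝ))
        rw [houter, h1,
          GLaux2.pd_shape (hu2 j) (hφ2 j) huX hφX (hAdX j) (hωdX j),
          GLaux2.covD_perturb huX hφX]
        rw [show covD j A (covD j A u) x = pd j (covD j A u) x
            - Complex.I * ((A x j : ℝ) : ℂ) * covD j A u x from rfl]
        rw [show covD j A (covD j A φ) x = pd j (covD j A φ) x
            - Complex.I * ((A x j : ℝ) : ℂ) * covD j A φ x from rfl]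
        rw [GLaux2.pd_covD_eval huX (hu2 j) (hAdX j),
            GLaux2.pd_covD_eval hφX (hφ2 j) (hAdX j)]
        rw [show covD j A u x = pd j u x - Complex.I * ((A x j : ℝ) : ℂ) * u x from rfl]
        rw [show covD j A φ x = pd j φ x - Complex.I * ((A x j : ℝ) : ℂ) * φ x from rfl]
        push_cast
        simp only [Complex.ext_iff, Complex.add_re, Complex.add_im, Complex.sub_re,
          Complex.sub_im, Complex.mul_re, Complex.mul_im, Complex.neg_re, Complex.neg_im,
          Complex.I_re, Complex.I_im, Complex.ofReal_re, Complex.ofReal_im, Complex.one_re,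
          Complex.one_im, Complex.conj_re, Complex.conj_im, Complex.re_ofNat,
          Complex.im_ofNat, pow_two]
        constructor <;> ring
      simp only [GL1]
      rw [Finset.sum_congr rfl hj, GLaux.sum_cubic_split]
      rw [show (∑ j : Fin n, (covD j A (covD j A φ) x
            - Complex.I * u x * ((pd j (fun w => ω w j) x : ℝ) : ℂ)
            - 2 * Complex.I * (covD j A u x * ((ω x j : ℝ) : ℂ))))
          = (∑ j : Fin n, covD j A (covD j A φ) x)
            - Complex.I * u x * (∑ j : Fin n, ((pd j (fun w => ω w j) x : ℝ) : ℂ))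
            - 2 * Complex.I * (∑ j : Fin n, (covD j A u x * ((ω x j : ℝ) : ℂ))) from by
        rw [Finset.sum_sub_distrib, Finset.sum_sub_distrib, ← Finset.mul_sum,
          ← Finset.mul_sum]]
      simp only [thetaStar, rpair]
      simp only [Complex.ofReal_add, Complex.ofReal_mul, Complex.ofReal_neg,
        Complex.ofReal_pow, Complex.ofReal_sum]
      generalize (∑ j : Fin n, covD j A (covD j A u) x) = S0
      generalize (∑ j : Fin n, covD j A (covD j A φ) x) = S1
      generalize (∑ j : Fin n, (covD j A u x * ((ω x j : ℝ) : ℂ))) = S2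
      generalize (∑ j : Fin n, ((pd j (fun w => ω w j) x : ℝ) : ℂ)) = S3
      generalize (∑ j : Fin n,
        (-(Complex.I) * φ x * ((pd j (fun w => ω w j) x : ℝ) : ℂ)
          - 2 * Complex.I * (covD j A φ x * ((ω x j : ℝ) : ℂ))
          - ((ω x j : ℝ) : ℂ) * ((ω x j : ℝ) : ℂ) * u x)) = S4
      generalize (∑ j : Fin n, (-(((ω x j : ℝ) : ℂ) * ((ω x j : ℝ) : ℂ)) * φ x)) = S5
      simp only [show (1 / 2 : ℂ) = ((1 / 2 : ℝ) : ℂ) from by norm_num]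
      simp only [Complex.ext_iff, Complex.add_re, Complex.add_im, Complex.sub_re,
        Complex.sub_im, Complex.mul_re, Complex.mul_im, Complex.neg_re, Complex.neg_im,
        Complex.I_re, Complex.I_im, Complex.ofReal_re, Complex.ofReal_im, Complex.one_re,
        Complex.one_im, Complex.conj_re, Complex.conj_im, Complex.re_ofNat,
        Complex.im_ofNat, Complex.normSq_apply, pow_two]
      constructor <;> ring
    exact GLaux.deriv_cubicC _ _ _ _ _ hf1
  · -- PART 2
    intro k
    have hf2 : ∀ s : ℝ,
        GL2 ε (fun y => u y + (s : ℂ) * φ y) (fun y j => A y j + s * ω y j) x k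
          = (-ε ^ 2 * ∑ j : Fin n,
                (pd j (fun y => pd j (fun w => A w k) y) x
                  - pd j (fun y => pd k (fun w => A w j) y) x))
            + (-ε ^ 2 * ∑ j : Fin n,
                (pd j (fun y => pd j (fun w => ω w k) y) x
                  - pd j (fun y => pd k (fun w => ω w j) y) x)) * s
            - (((pd k u x - Complex.I * ((A x k : ℝ) : ℂ) * u x)
                  * (-(Complex.I) * (starRingEnd ℂ) (u x)))
                + ((pd k u x - Complex.I * ((A x k : ℝ) : ℂ) * u x)
                    * (-(Complex.I) * (starRingEnd ℂ) (φ x))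
                  + (pd k φ x - Complex.I * ((ω x k : ℝ) : ℂ) * u x
                      - Complex.I * ((A x k : ℝ) : ℂ) * φ x)
                    * (-(Complex.I) * (starRingEnd ℂ) (u x))) * (s : ℂ)
                + ((pd k φ x - Complex.I * ((ω x k : ℝ) : ℂ) * u x
                      - Complex.I * ((A x k : ℝ) : ℂ) * φ x)
                    * (-(Complex.I) * (starRingEnd ℂ) (φ x))
                  + (-(Complex.I) * ((ω x k : ℝ) : ℂ) * φ x)
                    * (-(Complex.I) * (starRingEnd ℂ) (u x))) * ((s : ℂ) * (s : ℂ))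
                + ((-(Complex.I) * ((ω x k : ℝ) : ℂ) * φ x)
                    * (-(Complex.I) * (starRingEnd ℂ) (φ x)))
                  * ((s : ℂ) * (s : ℂ) * (s : ℂ))).re := by
      intro s
      have hj2 : ∀ j ∈ (Finset.univ : Finset (Fin n)),
          pd j (fun y => pd j (fun w => A w k + s * ω w k) y
            - pd k (fun w => A w j + s * ω w j) y) x
          = (pd j (fun y => pd j (fun w => A w k) y) x
              - pd j (fun y => pd k (fun w => A w j) y) x)
            + s * (pd j (fun y => pd j (fun w => ω w k) y) x
              - pd j (fun y => pd k (fun w => ω w j) y) x) := by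
        intro j _
        have hEq : (fun y => pd j (fun w => A w k + s * ω w k) y
              - pd k (fun w => A w j + s * ω w j) y)
            =ᶠ[nhds x] (fun y => (pd j (fun w => A w k) y + s * pd j (fun w => ω w k) y)
              - (pd k (fun w => A w j) y + s * pd k (fun w => ω w j) y)) := by
          filter_upwards [hmem] with y hy
          rw [GLaux.pd_add (hAdy k y hy) ((hωdy k y hy).const_mul s),
            GLaux.pd_const_mul (hωdy k y hy) s,
            GLaux.pd_add (hAdy j y hy) ((hωdy j y hy).const_mul s),
            GLaux.pd_const_mul (hωdy j y hy) s]
        have h1 : pd j (fun y => pd j (fun w => A w k + s * ω w k) y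
              - pd k (fun w => A w j + s * ω w j) y) x
            = pd j (fun y => (pd j (fun w => A w k) y + s * pd j (fun w => ω w k) y)
              - (pd k (fun w => A w j) y + s * pd k (fun w => ω w j) y)) x :=
          congrArg (fun L : (Fin n → ℝ) →L[ℝ] ℝ => L (Pi.single j 1)) (hEq.fderiv_eq (𝕜 := ℝ))
        rw [h1, GLaux.pd_sub ((hA2 j k).fun_add ((hω2 j k).const_mul s))
            ((hA2 k j).fun_add ((hω2 k j).const_mul s)),
          GLaux.pd_add (hA2 j k) ((hω2 j k).const_mul s), GLaux.pd_const_mul (hω2 j k) s,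
          GLaux.pd_add (hA2 k j) ((hω2 k j).const_mul s), GLaux.pd_const_mul (hω2 k j) s]
        ring
      simp only [GL2]
      rw [Finset.sum_congr rfl hj2, GLaux.sum_linear_split]
      have hCC : covD k (fun z m => A z m + s * ω z m) (fun z => u z + (s : ℂ) * φ z) x
            * (starRingEnd ℂ) (Complex.I * (u x + (s : ℂ) * φ x))
          = ((pd k u x - Complex.I * ((A x k : ℝ) : ℂ) * u x)
                  * (-(Complex.I) * (starRingEnd ℂ) (u x)))
              + ((pd k u x - Complex.I * ((A x k : ℝ) : ℂ) * u x)
                  * (-(Complex.I) * (starRingEnd ℂ) (φ x))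
                + (pd k φ x - Complex.I * ((ω x k : ℝ) : ℂ) * u x
                    - Complex.I * ((A x k : ℝ) : ℂ) * φ x)
                  * (-(Complex.I) * (starRingEnd ℂ) (u x))) * (s : ℂ)
              + ((pd k φ x - Complex.I * ((ω x k : ℝ) : ℂ) * u x
                    - Complex.I * ((A x k : ℝ) : ℂ) * φ x)
                  * (-(Complex.I) * (starRingEnd ℂ) (φ x))
                + (-(Complex.I) * ((ω x k : ℝ) : ℂ) * φ x)
                  * (-(Complex.I) * (starRingEnd ℂ) (u x))) * ((s : ℂ) * (s : ℂ))
              + ((-(Complex.I) * ((ω x k : ℝ) : ℂ) * φ x)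
                  * (-(Complex.I) * (starRingEnd ℂ) (φ x)))
                * ((s : ℂ) * (s : ℂ) * (s : ℂ)) := by
        rw [GLaux2.covD_perturb huX hφX]
        push_cast
        simp only [Complex.ext_iff, Complex.add_re, Complex.add_im, Complex.sub_re,
          Complex.sub_im, Complex.mul_re, Complex.mul_im, Complex.neg_re, Complex.neg_im,
          Complex.I_re, Complex.I_im, Complex.ofReal_re, Complex.ofReal_im, Complex.one_re,
          Complex.one_im, Complex.conj_re, Complex.conj_im, Complex.re_ofNat,
          Complex.im_ofNat, pow_two]
        constructor <;> ring
      simp only [rpair]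
      rw [hCC]
      ring
    have hd := GLaux.deriv_cubicR _ _ _ _ _ _ _ hf2
    rw [hd]
    rw [GLaux2.pd_thetaStar hΩ hx ε hu hφ hωc k]
    rw [Finset.sum_sub_distrib]
    rw [Finset.sum_congr rfl
      (fun j _ => GLaux.pd_comm hΩ (hωc j) hx j k)]
    simp only [rpair, covD]
    simp only [Complex.add_re, Complex.add_im, Complex.sub_re, Complex.sub_im,
      Complex.mul_re, Complex.mul_im, Complex.neg_re, Complex.neg_im, Complex.I_re,
      Complex.I_im, Complex.ofReal_re, Complex.ofReal_im, Complex.one_re, Complex.one_im,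
      Complex.conj_re, Complex.conj_im, Complex.re_ofNat, Complex.im_ofNat,
      Complex.normSq_apply, pow_two]
    ring


end
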